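/- Let V be a valuation ring and B a finitely generated V-algebra that is torsion-free as a V-module. Then B is a finitely presented V-algebra. -/

import Mathlib

set_option linter.unusedSectionVars false


open Function

section DvdMin
variable {V : Type*} [CommRing V] [IsDomain V] [ValuationRing V]

private lemma exists_dvd_min {ι : Type*} (s : Finset ι) (hs : s.Nonempty) (g : ι → V) :
    ∃ i ∈ s, ∀ j ∈ s, g i ∣ g j := by
  classical
  induction s using Finset.induction_on with
  | empty => exact absurd hs (by simp)
  | @insert a t ha ih =>
    rcases t.eq_empty_or_nonempty with rfl | ht
    · exact ⟨a, by simp, by simp⟩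
    · obtain ⟨i, hi, hdvd⟩ := ih ht
      rcases ValuationRing.dvd_total (g a) (g i) with h | h
      · exact ⟨a, Finset.mem_insert_self _ _, by
          intro j hj
          rcases Finset.mem_insert.mp hj with rfl | hj
          · exact dvd_rfl
          · exact h.trans (hdvd j hj)⟩
      · exact ⟨i, Finset.mem_insert_of_mem hi, by
          intro j hj
          rcases Finset.mem_insert.mp hj with rfl | hj
          · exact h
          · exact hdvd j hj⟩
end DvdMin

section Free
variable {V : Type*} [CommRing V] [IsDomain V] [ValuationRing V]
variable {M : Type*} [AddCommGroup M] [Module V M] [NoZeroSMulDivisors V M]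

private lemma free_aux : ∀ (k : ℕ) (s : Finset M), s.card ≤ k →
    Submodule.span V (s : Set M) = ⊤ → Module.Free V M := by
  classical
  intro k
  induction k with
  | zero =>
    intro s hcard hspan
    have hs : s = ∅ := Finset.card_eq_zero.mp (Nat.le_zero.mp hcard)
    subst hs
    have : ∀ m : M, m = 0 := by
      intro m
      have hm : m ∈ (⊤ : Submodule V M) := trivial
      rw [← hspan] at hm
      simpa using hm
    have : Subsingleton M := ⟨fun a b => by rw [this a, this b]⟩
    exact Module.Free.of_basis (Module.Basis.empty (ι := Fin 0) M)
  | succ k ih =>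
    intro s hcard hspan
    by_cases hli : LinearIndependent V (fun x : {x // x ∈ s} => (x : M))
    · exact Module.Free.of_basis (Module.Basis.mk hli (by
        rw [Subtype.range_coe_subtype]
        simp only [Finset.setOf_mem]
        rw [hspan]))
    · obtain ⟨g, hgsum, ⟨i₁, hgi₁⟩⟩ := Fintype.not_linearIndependent_iff.mp hli
      -- find dvd-minimal index among those with g ≠ 0
      set t : Finset {x // x ∈ s} := Finset.univ.filter (fun j => g j ≠ 0) with ht
      have hne : t.Nonempty := ⟨i₁, by simp [ht, hgi₁]⟩
      obtain ⟨i₀, hi₀t, hdvd⟩ := exists_dvd_min t hne g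
      have hgi₀ : g i₀ ≠ 0 := by simpa [ht] using hi₀t
      have hdvd' : ∀ j : {x // x ∈ s}, g i₀ ∣ g j := by
        intro j
        by_cases hj : g j = 0
        · simp [hj]
        · exact hdvd j (by simp [ht, hj])
      choose c hc using hdvd'
      have hkey : (∑ j : {x // x ∈ s}, c j • (j : M)) = 0 := by
        have : g i₀ • (∑ j : {x // x ∈ s}, c j • (j : M)) = 0 := by
          rw [Finset.smul_sum]
          rw [← hgsum]
          apply Finset.sum_congr rfl
          intro j _
          rw [smul_smul, ← hc j]
        rcases smul_eq_zero.mp this with h | h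
        · exact absurd h hgi₀
        · exact h
      have hci₀ : c i₀ = 1 := by
        have := hc i₀
        nth_rewrite 1 [← mul_one (g i₀)] at this
        exact (mul_left_cancel₀ hgi₀ this.symm)
      have hss : (i₀ : M) ∈ s := i₀.2
      have hrepr : (i₀ : M) = ∑ j ∈ Finset.univ.erase i₀, (-(c j)) • (j : M) := by
        have h2 := hkey
        rw [← Finset.add_sum_erase _ _ (Finset.mem_univ i₀), hci₀, one_smul] at h2
        have h3 := eq_neg_of_add_eq_zero_left h2
        rw [h3, ← Finset.sum_neg_distrib]
        exact Finset.sum_congr rfl (fun j _ => (neg_smul _ _).symm)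
      have hmem : (i₀ : M) ∈ Submodule.span V ((s.erase (i₀ : M)) : Set M) := by
        have hsum : (∑ j ∈ Finset.univ.erase i₀, (-(c j)) • (j : M)) ∈
            Submodule.span V ((s.erase (i₀ : M)) : Set M) := by
          apply Submodule.sum_mem
          intro j hj
          apply Submodule.smul_mem
          apply Submodule.subset_span
          simp only [Finset.coe_erase, Set.mem_diff, Set.mem_singleton_iff]
          exact ⟨j.2, fun hEq => (Finset.mem_erase.mp hj).1 (Subtype.coe_injective hEq)⟩
        rwa [← hrepr] at hsum
      have hspan' : Submodule.span V ((s.erase (i₀ : M)) : Set M) = ⊤ := by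
        have hins : insert (i₀ : M) (s.erase (i₀ : M)) = s := Finset.insert_erase hss
        have heq : Submodule.span V ((s.erase (i₀ : M)) : Set M) = Submodule.span V (s : Set M) := by
          conv_rhs => rw [← hins]
          rw [Finset.coe_insert, Submodule.span_insert_eq_span hmem]
        rw [heq, hspan]
      exact ih (s.erase (i₀ : M)) (by
        have := Finset.card_erase_of_mem hss
        omega) hspan'

theorem Module.free_of_fg_torsionFree' [Module.Finite V M] : Module.Free V M := by
  classical
  obtain ⟨s, hs⟩ := Module.Finite.fg_top (R := V) (M := M)
  exact free_aux s.card s le_rfl hs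

end Free


section Proj
variable {V : Type*} [CommRing V] [IsDomain V] [ValuationRing V]
variable {S : Type*} [AddCommGroup S] [Module V S]


theorem sat_fg_and_smul (T N : Submodule V S) (hNT : N ≤ T) (hT : T.FG)
    (hsat : ∀ (c : V) (x : S), c ≠ 0 → x ∈ T → c • x ∈ N → x ∈ N) :
    N.FG ∧ ∀ (J : Ideal V) (z : S), z ∈ N → z ∈ J • T → z ∈ J • N := by
  classical
  set N' : Submodule V ↥T := N.comap T.subtype with hN'
  haveI : Module.Finite V ↥T := Module.Finite.iff_fg.mpr hT
  haveI : NoZeroSMulDivisors V (↥T ⧸ N') := by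
    constructor
    intro c x h
    by_cases hc : c = 0
    · exact Or.inl hc
    · right
      obtain ⟨y, rfl⟩ := Submodule.Quotient.mk_surjective N' x
      rw [← Submodule.Quotient.mk_smul, Submodule.Quotient.mk_eq_zero] at h
      rw [Submodule.Quotient.mk_eq_zero]
      exact hsat c (y : S) hc y.2 h
  haveI : Module.Free V (↥T ⧸ N') := Module.free_of_fg_torsionFree'
  obtain ⟨σ, hσ⟩ := Module.projective_lifting_property N'.mkQ LinearMap.id N'.mkQ_surjective
  set q : ↥T →ₗ[V] ↥T := LinearMap.id - σ ∘ₗ N'.mkQ with hqdef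
  have hq1 : ∀ x : ↥T, q x ∈ N' := by
    intro x
    have : N'.mkQ (q x) = 0 := by
      simp only [hqdef, LinearMap.sub_apply, LinearMap.id_apply, LinearMap.coe_comp,
        Function.comp_apply, map_sub]
      have := congrArg (fun f => f (N'.mkQ x)) hσ
      simp only [LinearMap.coe_comp, Function.comp_apply, LinearMap.id_apply] at this
      rw [this]
      simp
    rwa [← Submodule.Quotient.mk_eq_zero]
  have hq2 : ∀ x : ↥T, x ∈ N' → q x = x := by
    intro x hx
    have : N'.mkQ x = 0 := (Submodule.Quotient.mk_eq_zero _).mpr hx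
    simp [hqdef, this]
  constructor
  · -- N is finitely generated
    have hNeq : N = Submodule.map (T.subtype ∘ₗ q) ⊤ := by
      apply le_antisymm
      · intro x hx
        refine ⟨⟨x, hNT hx⟩, trivial, ?_⟩
        have hx' : (⟨x, hNT hx⟩ : ↥T) ∈ N' := hx
        simp [hq2 _ hx']
      · rintro y ⟨x, -, rfl⟩
        exact hq1 x
    rw [hNeq]
    exact Submodule.FG.map _ ((Submodule.fg_top T).mpr hT)
  · intro J z hzN hzJT
    set z' : ↥T := ⟨z, hNT hzN⟩ with hz'def
    have hz' : z' ∈ J • (⊤ : Submodule V ↥T) := by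
      have hmap : Submodule.map T.subtype (J • (⊤ : Submodule V ↥T)) = J • T := by
        rw [Submodule.map_smul'', Submodule.map_top, Submodule.range_subtype]
      rw [← hmap] at hzJT
      obtain ⟨w, hw, hwz⟩ := hzJT
      have : w = z' := Subtype.ext hwz
      rwa [this] at hw
    have hqz : ∀ w ∈ J • (⊤ : Submodule V ↥T), q w ∈ J • N' := by
      intro w hw
      refine Submodule.smul_induction_on hw ?_ ?_
      · intro r hr m _
        rw [map_smul]
        exact Submodule.smul_mem_smul hr (hq1 m)
      · intro x y hx hy
        rw [map_add]
        exact Submodule.add_mem _ hx hy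
    have hz'' : z' ∈ J • N' := by
      have := hqz z' hz'
      rwa [hq2 z' hzN] at this
    have hmapN : Submodule.map T.subtype (J • N') = J • N := by
      rw [Submodule.map_smul'', Submodule.map_comap_subtype, inf_eq_right.mpr hNT]
    rw [← hmapN]
    exact ⟨z', hz'', rfl⟩

end Proj


open MvPolynomial

universe u

namespace NagataAux

variable {V : Type u} [CommRing V] [IsDomain V] [ValuationRing V] {n : ℕ}

/-- dehomogenization: substitute 1 for the 0-th variable. -/
noncomputable def dhom : MvPolynomial (Fin (n+1)) V →ₐ[V] MvPolynomial (Fin n) V :=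
  aeval (Fin.cons 1 X)

lemma dhom_rename (p : MvPolynomial (Fin n) V) : dhom (rename Fin.succ p) = p := by
  rw [dhom, aeval_rename]
  have : (Fin.cons 1 X ∘ Fin.succ : Fin n → MvPolynomial (Fin n) V) = X := by
    funext i; simp [Fin.cons_succ]
  rw [this]
  exact aeval_X_left_apply p

lemma dhom_X0 : dhom (X 0 : MvPolynomial (Fin (n+1)) V) = 1 := by
  rw [dhom, aeval_X, Fin.cons_zero]

/-- homogenization exists -/
lemma exists_homog (f : MvPolynomial (Fin n) V) (e : ℕ) (he : f.totalDegree ≤ e) :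
    ∃ F : MvPolynomial (Fin (n+1)) V, F.IsHomogeneous e ∧ dhom F = f := by
  classical
  refine ⟨∑ i ∈ Finset.range (f.totalDegree + 1),
      (X 0) ^ (e - i) * rename Fin.succ (homogeneousComponent i f), ?_, ?_⟩
  · apply IsHomogeneous.sum
    intro i hi
    have hi' : i ≤ e := le_trans (Nat.lt_succ_iff.mp (Finset.mem_range.mp hi)) he
    have h1 : ((X 0 : MvPolynomial (Fin (n+1)) V) ^ (e - i)).IsHomogeneous (e - i) := by
      simpa using (isHomogeneous_X V (0 : Fin (n+1))).pow (e - i)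
    have h2 : (rename Fin.succ (homogeneousComponent i f)).IsHomogeneous i :=
      (homogeneousComponent_isHomogeneous i f).rename_isHomogeneous
    have := h1.mul h2
    rwa [Nat.sub_add_cancel hi'] at this
  · rw [map_sum]
    conv_rhs => rw [← sum_homogeneousComponent f]
    apply Finset.sum_congr rfl
    intro i _
    rw [map_mul, map_pow, dhom_X0, one_pow, one_mul, dhom_rename]

/-- finiteness of each homogeneous submodule -/
lemma homogSubmodule_fg (e : ℕ) :
    (homogeneousSubmodule (Fin (n+1)) V e).FG := by
  classical
  have hfin : {d : Fin (n+1) →₀ ℕ | d.degree = e}.Finite := by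
    have : {d : Fin (n+1) →₀ ℕ | d.degree = e} ⊆
        Set.Iic (Finsupp.equivFunOnFinite.symm (fun _ => e)) := by
      intro d hd
      intro i
      simp only [Finsupp.coe_equivFunOnFinite_symm]
      calc d i ≤ d.degree := Finsupp.le_degree i d
        _ = e := hd
    exact (Set.finite_Iic _).subset this
  refine ⟨hfin.toFinset.image (fun d => monomial d (1 : V)), ?_⟩
  rw [Finset.coe_image, Set.Finite.coe_toFinset]
  apply le_antisymm
  · rw [Submodule.span_le]
    rintro _ ⟨d, hd, rfl⟩
    exact isHomogeneous_monomial 1 hd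
  · intro F hF
    rw [mem_homogeneousSubmodule] at hF
    rw [F.as_sum]
    apply Submodule.sum_mem
    intro d hd
    have hdeg : d.degree = e := by
      have := hF (mem_support_iff.mp hd)
      rwa [Pi.one_def, ← Finsupp.degree_eq_weight_one] at this
    have : monomial d (coeff d F) = (coeff d F) • monomial d (1 : V) := by
      rw [smul_monomial, smul_eq_mul, mul_one]
    rw [this]
    apply Submodule.smul_mem
    apply Submodule.subset_span
    exact ⟨d, hdeg, rfl⟩



local notation "κ" => IsLocalRing.ResidueField V
local notation "S" => MvPolynomial (Fin (n+1)) V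
local notation "Sk" => MvPolynomial (Fin (n+1)) (IsLocalRing.ResidueField V)

noncomputable def ψm : MvPolynomial (Fin (n+1)) V →+*
    MvPolynomial (Fin (n+1)) (IsLocalRing.ResidueField V) :=
  MvPolynomial.map (algebraMap V (IsLocalRing.ResidueField V))

lemma res_surj : Function.Surjective (algebraMap V (IsLocalRing.ResidueField V)) :=
  Ideal.Quotient.mk_surjective

lemma psi_smul (v : V) (F : S) : ψm (v • F) = (algebraMap V κ v) • ψm F := by
  rw [smul_eq_C_mul, ψm, map_mul, MvPolynomial.map_C, ← smul_eq_C_mul]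

lemma psi_isHomogeneous {F : S} {e : ℕ} (hF : F.IsHomogeneous e) :
    (ψm F).IsHomogeneous e := by
  intro d hd
  apply hF
  intro h0
  rw [ψm, coeff_map, h0, map_zero] at hd
  exact hd rfl

/-- the degree-`e` part of the homogenized ideal -/
noncomputable def Itil (I : Ideal (MvPolynomial (Fin n) V)) (e : ℕ) :
    Submodule V S :=
  homogeneousSubmodule (Fin (n+1)) V e ⊓
    Submodule.comap (dhom (V := V) (n := n)).toLinearMap (Submodule.restrictScalars V I)

lemma mem_Itil {I : Ideal (MvPolynomial (Fin n) V)} {e : ℕ} {F : S} :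
    F ∈ Itil I e ↔ F.IsHomogeneous e ∧ dhom F ∈ I := Iff.rfl

lemma monomial_mul_Itil {I : Ideal (MvPolynomial (Fin n) V)} {e : ℕ} {F : S}
    (d : Fin (n+1) →₀ ℕ) (hF : F ∈ Itil I e) :
    (monomial d (1 : V)) * F ∈ Itil I (d.degree + e) := by
  obtain ⟨h1, h2⟩ := mem_Itil.mp hF
  refine mem_Itil.mpr ⟨(isHomogeneous_monomial (1:V) rfl).mul h1, ?_⟩
  rw [map_mul]
  exact Ideal.mul_mem_left _ _ h2

lemma X_mul_Itil {I : Ideal (MvPolynomial (Fin n) V)} {e : ℕ} {F : S}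
    (i : Fin (n+1)) (hF : F ∈ Itil I e) : X i * F ∈ Itil I (e+1) := by
  obtain ⟨h1, h2⟩ := mem_Itil.mp hF
  refine mem_Itil.mpr ⟨by simpa [add_comm] using (isHomogeneous_X V i).mul h1, ?_⟩
  rw [map_mul]
  exact Ideal.mul_mem_left _ _ h2

/-- image of a `V`-submodule of `S` under `ψm`, as a `κ`-submodule of `Sk` -/
noncomputable def imSub (U : Submodule V S) : Submodule κ Sk where
  carrier := ψm '' (U : Set S)
  add_mem' := by
    rintro _ _ ⟨a, ha, rfl⟩ ⟨b, hb, rfl⟩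
    exact ⟨a + b, U.add_mem ha hb, map_add _ _ _⟩
  zero_mem' := ⟨0, U.zero_mem, map_zero _⟩
  smul_mem' := by
    rintro c _ ⟨a, ha, rfl⟩
    obtain ⟨v, rfl⟩ := res_surj c
    exact ⟨v • a, U.smul_mem v ha, psi_smul v a⟩

lemma mem_imSub_of_mem {U : Submodule V S} {F : S} (hF : F ∈ U) : ψm F ∈ imSub U :=
  ⟨F, hF, rfl⟩

lemma imSub_homog {I : Ideal (MvPolynomial (Fin n) V)} {e : ℕ} {u : Sk}
    (hu : u ∈ imSub (Itil I e)) : u.IsHomogeneous e := by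
  obtain ⟨F, hF, rfl⟩ := hu
  exact psi_isHomogeneous (mem_Itil.mp hF).1

/-- homogeneous × image lemma -/
lemma homog_mul_imSub {I : Ideal (MvPolynomial (Fin n) V)} {e δ : ℕ} (h : Sk)
    (hh : h.IsHomogeneous δ) {u : Sk} (hu : u ∈ imSub (Itil I e)) :
    h * u ∈ imSub (Itil I (δ + e)) := by
  classical
  obtain ⟨F, hF, rfl⟩ := hu
  rw [h.as_sum, Finset.sum_mul]
  apply Submodule.sum_mem
  intro d hd
  have hdeg : d.degree = δ := by
    have := hh (mem_support_iff.mp hd)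
    rwa [Pi.one_def, ← Finsupp.degree_eq_weight_one] at this
  have h1 : monomial d (coeff d h) * ψm F = (coeff d h) • ((monomial d (1:κ)) * ψm F) := by
    rw [smul_eq_C_mul, ← mul_assoc, C_mul_monomial, mul_one]
  rw [h1]
  apply Submodule.smul_mem
  have h2 : (monomial d (1:κ)) * ψm F = ψm ((monomial d (1:V)) * F) := by
    rw [ψm, map_mul, MvPolynomial.map_monomial]
    norm_num
  rw [h2]
  exact mem_imSub_of_mem (hdeg ▸ monomial_mul_Itil d hF)

/-- decomposition of a positive-degree homogeneous polynomial -/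
lemma homog_mem_span_X_mul {R : Type*} [CommRing R] (h : MvPolynomial (Fin (n+1)) R)
    (m : ℕ) (hh : h.IsHomogeneous (m+1)) :
    h ∈ Submodule.span R (⋃ i : Fin (n+1),
      (fun p => X i * p) '' (homogeneousSubmodule (Fin (n+1)) R m : Set (MvPolynomial (Fin (n+1)) R))) := by
  classical
  rw [h.as_sum]
  apply Submodule.sum_mem
  intro d hd
  have hdeg : d.degree = m + 1 := by
    have := hh (mem_support_iff.mp hd)
    rwa [Pi.one_def, ← Finsupp.degree_eq_weight_one] at this
  have hne : ∃ i, d i ≠ 0 := by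
    by_contra hc
    push_neg at hc
    have : d = 0 := Finsupp.ext fun i => hc i
    rw [this] at hdeg
    simp [map_zero] at hdeg
  obtain ⟨i, hi⟩ := hne
  have hle : Finsupp.single i 1 ≤ d := by
    rw [Finsupp.single_le_iff]
    omega
  have hsplit : monomial d (coeff d h) = X i * monomial (d - Finsupp.single i 1) (coeff d h) := by
    have : (X i : MvPolynomial (Fin (n+1)) R) = monomial (Finsupp.single i 1) 1 := by
      rw [← X_pow_eq_monomial, pow_one]
    rw [this, monomial_mul, one_mul, add_tsub_cancel_of_le hle]
  rw [hsplit]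
  apply Submodule.subset_span
  apply Set.mem_iUnion.mpr
  refine ⟨i, ⟨monomial (d - Finsupp.single i 1) (coeff d h), ?_, rfl⟩⟩
  rw [SetLike.mem_coe, mem_homogeneousSubmodule]
  apply isHomogeneous_monomial
  -- degree (d - single i 1) = m
  have hdegsub : (d - Finsupp.single i 1).degree + (Finsupp.single i 1).degree = d.degree := by
    rw [Finsupp.degree_eq_weight_one, ← map_add, tsub_add_cancel_of_le hle]
  have hsingle : (Finsupp.single i (1:ℕ)).degree = 1 := by
    rw [Finsupp.degree_apply, Finsupp.support_single_ne_zero _ one_ne_zero, Finset.sum_singleton,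
      Finsupp.single_eq_same]
  omega

/-- the module generated by `X i * Itil I e` -/
noncomputable def Mspan (I : Ideal (MvPolynomial (Fin n) V)) (e : ℕ) : Submodule V S :=
  Submodule.span V (⋃ i : Fin (n+1), (fun F => X i * F) '' (Itil I e : Set S))

lemma Mspan_le_Itil (I : Ideal (MvPolynomial (Fin n) V)) (e : ℕ) :
    Mspan I e ≤ Itil I (e+1) := by
  rw [Mspan, Submodule.span_le]
  rintro _ ⟨s, ⟨i, rfl⟩, ⟨F, hF, rfl⟩⟩
  exact X_mul_Itil i hF

lemma Itil_pkg (I : Ideal (MvPolynomial (Fin n) V))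
    (hsat : ∀ (c : V) (f : MvPolynomial (Fin n) V), c ≠ 0 → c • f ∈ I → f ∈ I) (e : ℕ) :
    (Itil I e).FG ∧ ∀ (J : Ideal V) (z : S), z ∈ Itil I e →
      z ∈ J • (homogeneousSubmodule (Fin (n+1)) V e) → z ∈ J • Itil I e := by
  apply sat_fg_and_smul (homogeneousSubmodule (Fin (n+1)) V e) (Itil I e) inf_le_left
    (homogSubmodule_fg e)
  intro c x hc hxT hcx
  refine mem_Itil.mpr ⟨hxT, ?_⟩
  have h2 : dhom (c • x) ∈ I := (mem_Itil.mp hcx).2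
  rw [map_smul] at h2
  exact hsat c _ hc h2

lemma exists_E (I : Ideal (MvPolynomial (Fin n) V)) :
    ∃ E : ℕ, ∀ e : ℕ, E ≤ e → ∀ F ∈ Itil I (e+1),
      ψm F ∈ Submodule.span κ (⋃ i : Fin (n+1),
        (fun u => X i * u) '' (imSub (Itil I e) : Set Sk)) := by
  classical
  set K : ℕ →o Ideal Sk :=
    ⟨fun e => Ideal.span (⋃ d : ℕ, ⋃ (_ : d ≤ e), (imSub (Itil I d) : Set Sk)), by
      intro a b hab
      apply Ideal.span_mono
      intro x hx
      simp only [Set.mem_iUnion] at hx ⊢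
      obtain ⟨d, hd, hx⟩ := hx
      exact ⟨d, le_trans hd hab, hx⟩⟩ with hK
  obtain ⟨E, hE⟩ := monotone_stabilizes_iff_noetherian.mpr inferInstance K
  refine ⟨E, ?_⟩
  intro e he F hF
  have hmem : ψm F ∈ K E := by
    have h1 : ψm F ∈ K (e+1) := by
      apply Ideal.subset_span
      simp only [Set.mem_iUnion]
      exact ⟨e+1, le_rfl, mem_imSub_of_mem hF⟩
    rw [hE (e+1) (le_trans he (Nat.le_succ e))]
    exact h1
  obtain ⟨Tf, hTfsub, hTfmem⟩ := Submodule.mem_span_finite_of_mem_span hmem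
  obtain ⟨μ, -, hμ⟩ := Submodule.mem_span_finset.mp hTfmem
  have hgdata : ∀ g ∈ Tf, ∃ d, d ≤ E ∧ g ∈ imSub (Itil I d) := by
    intro g hg
    have h0 := hTfsub hg
    simp only [Set.mem_iUnion] at h0
    obtain ⟨d, hd, hx⟩ := h0
    exact ⟨d, hd, hx⟩
  choose dg hdgE hdgmem using hgdata
  set RT := Submodule.span κ (⋃ i : Fin (n+1),
      (fun u => X i * u) '' (imSub (Itil I e) : Set Sk)) with hRT
  have hhomF : (ψm F).IsHomogeneous (e+1) := psi_isHomogeneous (mem_Itil.mp hF).1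
  have hcomp : ψm F = homogeneousComponent (e+1) (ψm F) := by
    rw [homogeneousComponent_of_mem (mem_homogeneousSubmodule _ _ |>.mpr hhomF), if_pos rfl]
  rw [hcomp, ← hμ, map_sum]
  apply Submodule.sum_mem
  intro g hg
  rw [smul_eq_mul]
  have hgh : g.IsHomogeneous (dg g hg) := imSub_homog (hdgmem g hg)
  have hexp : μ g * g = ∑ j ∈ Finset.range ((μ g).totalDegree + 1),
      homogeneousComponent j (μ g) * g := by
    rw [← Finset.sum_mul, sum_homogeneousComponent]
  rw [hexp, map_sum]
  apply Submodule.sum_mem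
  intro j hj
  have hprod : (homogeneousComponent j (μ g) * g).IsHomogeneous (j + dg g hg) :=
    (homogeneousComponent_isHomogeneous j (μ g)).mul hgh
  rw [homogeneousComponent_of_mem (mem_homogeneousSubmodule _ _ |>.mpr hprod)]
  by_cases hcase : e + 1 = j + dg g hg
  · rw [if_pos hcase]
    have hj1 : 1 ≤ j := by
      have hd := hdgE g hg
      omega
    have hjhom : (homogeneousComponent j (μ g)).IsHomogeneous ((j-1)+1) := by
      have := homogeneousComponent_isHomogeneous j (μ g)
      rwa [Nat.sub_add_cancel hj1]
    have hdecomp := homog_mem_span_X_mul (homogeneousComponent j (μ g)) (j-1) hjhom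
    -- multiply by g and land in RT
    set W : Submodule κ Sk :=
      { carrier := {h : Sk | h * g ∈ RT}
        add_mem' := by
          intro a b ha hb
          simp only [Set.mem_setOf_eq] at *
          rw [add_mul]
          exact Submodule.add_mem _ ha hb
        zero_mem' := by
          simp only [Set.mem_setOf_eq, zero_mul]
          exact Submodule.zero_mem _
        smul_mem' := by
          intro c a ha
          simp only [Set.mem_setOf_eq] at *
          rw [smul_mul_assoc]
          exact Submodule.smul_mem _ c ha } with hW
    have hle : Submodule.span κ (⋃ i : Fin (n+1), (fun p => X i * p) ''
        (homogeneousSubmodule (Fin (n+1)) κ (j-1) : Set Sk)) ≤ W := by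
      rw [Submodule.span_le]
      rintro _ ⟨_, ⟨i, rfl⟩, ⟨p, hp, rfl⟩⟩
      show (X i * p) * g ∈ RT
      rw [mul_assoc]
      apply Submodule.subset_span
      refine Set.mem_iUnion.mpr ⟨i, ⟨p * g, ?_, rfl⟩⟩
      have hmul := homog_mul_imSub p (by rwa [SetLike.mem_coe, mem_homogeneousSubmodule] at hp)
        (hdgmem g hg)
      have harith : (j-1) + dg g hg = e := by omega
      rw [harith] at hmul
      exact hmul
    exact hle hdecomp
  · rw [if_neg hcase]
    exact Submodule.zero_mem _

lemma stab (I : Ideal (MvPolynomial (Fin n) V))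
    (hsat : ∀ (c : V) (f : MvPolynomial (Fin n) V), c ≠ 0 → c • f ∈ I → f ∈ I) :
    ∃ E : ℕ, ∀ e : ℕ, E ≤ e → Itil I (e+1) = Mspan I e := by
  obtain ⟨E, hE⟩ := exists_E I
  refine ⟨E, fun e he => ?_⟩
  have h1 : Itil I (e+1) ≤ Mspan I e ⊔ (IsLocalRing.maximalIdeal V) • Itil I (e+1) := by
    intro F hF
    have h2 := hE e he F hF
    have h3 : Submodule.span κ (⋃ i : Fin (n+1),
        (fun u => X i * u) '' (imSub (Itil I e) : Set Sk)) ≤ imSub (Mspan I e) := by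
      rw [Submodule.span_le]
      rintro _ ⟨_, ⟨i, rfl⟩, ⟨u, hu, rfl⟩⟩
      obtain ⟨G, hG, rfl⟩ := hu
      have hx : (X i : Sk) * ψm G = ψm (X i * G) := by
        rw [ψm, map_mul, MvPolynomial.map_X]
      show (X i : Sk) * ψm G ∈ (imSub (Mspan I e) : Set Sk)
      rw [hx]
      exact mem_imSub_of_mem (Submodule.subset_span (Set.mem_iUnion.mpr ⟨i, ⟨G, hG, rfl⟩⟩))
    obtain ⟨G, hG, hGF⟩ := h3 h2
    set z : S := F - G with hz
    have hzI : z ∈ Itil I (e+1) := sub_mem hF (Mspan_le_Itil I e hG)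
    have hzpsi : ψm z = 0 := by rw [hz, map_sub, hGF, sub_self]
    have hzT : z ∈ (IsLocalRing.maximalIdeal V) •
        (homogeneousSubmodule (Fin (n+1)) V (e+1)) := by
      classical
      have hsum : (∑ d ∈ z.support, monomial d (coeff d z)) ∈
          (IsLocalRing.maximalIdeal V) • (homogeneousSubmodule (Fin (n+1)) V (e+1)) := by
        apply Submodule.sum_mem
        intro d hd
        have hco : coeff d z ∈ IsLocalRing.maximalIdeal V := by
          have : algebraMap V κ (coeff d z) = 0 := by
            have := congrArg (coeff d) hzpsi
            rwa [ψm, coeff_map, coeff_zero] at this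
          rwa [show algebraMap V κ = IsLocalRing.residue V from rfl,
            IsLocalRing.residue_eq_zero_iff] at this
        have hmono : monomial d (1 : V) ∈ homogeneousSubmodule (Fin (n+1)) V (e+1) := by
          rw [mem_homogeneousSubmodule]
          apply isHomogeneous_monomial
          have := (mem_Itil.mp hzI).1 (mem_support_iff.mp hd)
          rwa [Pi.one_def, ← Finsupp.degree_eq_weight_one] at this
        have heq : monomial d (coeff d z) = (coeff d z) • monomial d (1:V) := by
          rw [smul_monomial, smul_eq_mul, mul_one]
        rw [heq]
        exact Submodule.smul_mem_smul hco hmono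
      rwa [← z.as_sum] at hsum
    have hz2 := (Itil_pkg I hsat (e+1)).2 (IsLocalRing.maximalIdeal V) z hzI hzT
    have hFGz : F = G + z := by rw [hz]; ring
    rw [hFGz]
    exact Submodule.mem_sup.mpr ⟨G, hG, z, hz2, rfl⟩
  have hjac : (IsLocalRing.maximalIdeal V) ≤ (⊥ : Ideal V).jacobson := by
    rw [IsLocalRing.jacobson_eq_maximalIdeal ⊥ bot_ne_top]
  have hsmul := Submodule.smul_le_of_le_smul_of_le_jacobson_bot
    (Itil_pkg I hsat (e+1)).1 hjac h1
  exact le_antisymm (le_trans h1 (sup_le le_rfl hsmul)) (Mspan_le_Itil I e)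

/-- preimage of an ideal under dhom, as a V-submodule -/
noncomputable def dpre (J : Ideal (MvPolynomial (Fin n) V)) : Submodule V S :=
  Submodule.comap (dhom (V := V) (n := n)).toLinearMap (Submodule.restrictScalars V J)

lemma mem_dpre {J : Ideal (MvPolynomial (Fin n) V)} {F : S} :
    F ∈ dpre J ↔ dhom F ∈ J := Iff.rfl

theorem ideal_fg (I : Ideal (MvPolynomial (Fin n) V))
    (hsat : ∀ (c : V) (f : MvPolynomial (Fin n) V), c ≠ 0 → c • f ∈ I → f ∈ I) :
    I.FG := by
  classical
  obtain ⟨E, hE⟩ := stab I hsat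
  have hfg : ∀ e, (Itil I e).FG := fun e => (Itil_pkg I hsat e).1
  choose gset hgset using hfg
  refine ⟨(Finset.range (E+1)).biUnion (fun e => (gset e).image (fun F => dhom F)), ?_⟩
  set G : Finset (MvPolynomial (Fin n) V) :=
    (Finset.range (E+1)).biUnion (fun e => (gset e).image (fun F => dhom F)) with hGdef
  apply le_antisymm
  · rw [Ideal.span_le]
    intro x hx
    simp only [hGdef, Finset.coe_biUnion, Finset.coe_image, Set.mem_iUnion,
      Set.mem_image, Finset.mem_coe] at hx
    obtain ⟨e, _, F, hF, rfl⟩ := hx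
    have hFI : F ∈ Itil I e := by
      rw [← hgset e]
      exact Submodule.subset_span hF
    exact (mem_Itil.mp hFI).2
  · -- I ≤ span G
    have base : ∀ e, e ≤ E → Itil I e ≤ dpre (Ideal.span (G : Set (MvPolynomial (Fin n) V))) := by
      intro e heE
      rw [← hgset e, Submodule.span_le]
      intro F hF
      rw [SetLike.mem_coe, mem_dpre]
      apply Ideal.subset_span
      simp only [hGdef, Finset.coe_biUnion, Finset.coe_image, Set.mem_iUnion,
        Set.mem_image, Finset.mem_coe]
      exact ⟨e, Finset.mem_range.mpr (by omega), F, hF, rfl⟩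
    have key : ∀ e, Itil I e ≤ dpre (Ideal.span (G : Set (MvPolynomial (Fin n) V))) := by
      intro e
      induction e with
      | zero => exact base 0 (by omega)
      | succ e ih =>
        by_cases hle : e + 1 ≤ E
        · exact base (e+1) hle
        · have he : E ≤ e := by omega
          rw [hE e he, Mspan, Submodule.span_le]
          rintro _ ⟨_, ⟨i, rfl⟩, ⟨F, hF, rfl⟩⟩
          rw [SetLike.mem_coe, mem_dpre, map_mul]
          exact Ideal.mul_mem_left _ _ (mem_dpre.mp (ih hF))
    intro f hf
    set e := max E f.totalDegree with he
    obtain ⟨F, hFhom, hFd⟩ := exists_homog f e (le_max_right _ _)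
    have hFI : F ∈ Itil I e := mem_Itil.mpr ⟨hFhom, by rw [hFd]; exact hf⟩
    have := key e hFI
    rw [mem_dpre, hFd] at this
    exact this

end NagataAux

/-- Nagata's theorem: a finitely generated algebra over a valuation ring that is
torsion-free as a module is a finitely presented algebra. -/
theorem finitePresentation_of_finiteType_torsionFree
    (V B : Type u) [CommRing V] [IsDomain V] [ValuationRing V]
    [CommRing B] [Algebra V B] [Algebra.FiniteType V B] [NoZeroSMulDivisors V B] :
    Algebra.FinitePresentation V B := by
  obtain ⟨n, φ, hφ⟩ := Algebra.FiniteType.iff_quotient_mvPolynomial''.mp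
    (inferInstance : Algebra.FiniteType V B)
  refine ⟨⟨n, φ, hφ, ?_⟩⟩
  apply NagataAux.ideal_fg
  intro c f hc hcf
  rw [RingHom.mem_ker] at hcf ⊢
  have hsm : φ.toRingHom (c • f) = c • φ f := map_smul φ c f
  rw [hsm] at hcf
  rcases smul_eq_zero.mp hcf with h | h
  · exact absurd h hc
  · exact h
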